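/- arXiv:1211.0888 — 8 statements merged into one kernel-verified Lean document; each statement's English description precedes it below -/
import Mathlib

section
/- If (κ, α) : ℝ → ℝ × ℝ are differentiable functions satisfying the BPS equations κ' = (m/A)·κ·(1-κ²)·cos(2α) and α' = m·sin(2α) (with constants m, A > 0), then they also satisfy the second-order Euler–Lagrange equations κ'' = -(κ(1-κ²)/A)·((α')² + m²sin²(2α) - m²(1-3κ²)cos²(2α)/A) and ((1-κ²)²α')' = m²(1-κ²)²(1 - 2κ²/A)·sin(4α). -/
open Real

theorem bps_implies_euler_lagrange
    (m A : ℝ) (hm : 0 < m) (hA : 0 < A)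
    (κ α : ℝ → ℝ) (hκ : ContDiff ℝ 2 κ) (hα : ContDiff ℝ 2 α)
    (hbps1 : ∀ x, deriv κ x = (m / A) * κ x * (1 - κ x ^ 2) * Real.cos (2 * α x))
    (hbps2 : ∀ x, deriv α x = m * Real.sin (2 * α x)) :
    (∀ x, deriv (deriv κ) x =
      -(κ x * (1 - κ x ^ 2) / A) *
        ((deriv α x) ^ 2 + m ^ 2 * Real.sin (2 * α x) ^ 2
          - m ^ 2 * (1 - 3 * κ x ^ 2) * Real.cos (2 * α x) ^ 2 / A)) ∧
    (∀ x, deriv (fun y => (1 - κ y ^ 2) ^ 2 * deriv α y) x =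
      m ^ 2 * (1 - κ x ^ 2) ^ 2 * (1 - 2 * κ x ^ 2 / A) * Real.sin (4 * α x)) := by
  have hκd : Differentiable ℝ κ := hκ.differentiable (by norm_num)
  have hαd : Differentiable ℝ α := hα.differentiable (by norm_num)
  have hκ' : deriv κ = fun y => (m / A) * κ y * (1 - κ y ^ 2) * Real.cos (2 * α y) :=
    funext hbps1
  have hα' : deriv α = fun y => m * Real.sin (2 * α y) := funext hbps2
  have hA' : A ≠ 0 := ne_of_gt hA
  constructor
  · intro x
    have hκ0 : HasDerivAt κ (deriv κ x) x := (hκd x).hasDerivAt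
    have hα0 : HasDerivAt α (deriv α x) x := (hαd x).hasDerivAt
    have hcos : HasDerivAt (fun y => Real.cos (2 * α y))
        (-Real.sin (2 * α x) * (2 * deriv α x)) x := (hα0.const_mul 2).cos
    have h1 : HasDerivAt (fun y => (m / A) * κ y * (1 - κ y ^ 2) * Real.cos (2 * α y))
        (((m / A) * deriv κ x * (1 - κ x ^ 2) +
          (m / A) * κ x * (0 - 2 * κ x ^ 1 * deriv κ x)) * Real.cos (2 * α x) +
          (m / A) * κ x * (1 - κ x ^ 2) * (-Real.sin (2 * α x) * (2 * deriv α x))) x := by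
      exact ((hκ0.const_mul (m / A)).mul ((hasDerivAt_const x (1:ℝ)).sub (hκ0.pow 2))).mul hcos
    rw [hκ']
    rw [h1.deriv, hbps1 x, hbps2 x]
    ring
  · intro x
    have hκ0 : HasDerivAt κ (deriv κ x) x := (hκd x).hasDerivAt
    have hα0 : HasDerivAt α (deriv α x) x := (hαd x).hasDerivAt
    have hsin : HasDerivAt (fun y => m * Real.sin (2 * α y))
        (m * (Real.cos (2 * α x) * (2 * deriv α x))) x :=
      ((hα0.const_mul 2).sin).const_mul m
    have h2 : HasDerivAt (fun y => (1 - κ y ^ 2) ^ 2 * (m * Real.sin (2 * α y)))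
        ((2 * (1 - κ x ^ 2) ^ 1 * (0 - 2 * κ x ^ 1 * deriv κ x)) * (m * Real.sin (2 * α x)) +
          (1 - κ x ^ 2) ^ 2 * (m * (Real.cos (2 * α x) * (2 * deriv α x)))) x :=
      (((hasDerivAt_const x (1:ℝ)).sub (hκ0.pow 2)).pow 2).mul hsin
    have hεq : (fun y => (1 - κ y ^ 2) ^ 2 * deriv α y) =
        fun y => (1 - κ y ^ 2) ^ 2 * (m * Real.sin (2 * α y)) := by
      funext y; rw [hbps2 y]
    have h4 : Real.sin (4 * α x) = 2 * Real.sin (2 * α x) * Real.cos (2 * α x) := by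
      rw [show (4:ℝ) * α x = 2 * (2 * α x) by ring, Real.sin_two_mul]
    rw [hεq, h2.deriv, hbps1 x, hbps2 x, h4]
    ring
end

section
/- For m, A, r > 0 and smooth functions κ, α : ℝ → ℝ, the pointwise energy density identity holds: r·(4A(κ')² + 2(1-κ²)²(α')² + 2m²(1-κ²)²sin²(2α) + 4m²κ²(1-κ²)²cos²(2α)/A) = r·(4A·(κ' - (m/A)κ(1-κ²)cos(2α))² + 2(1-κ²)²(α' - m·sin(2α))²) - 2mr·((1-κ²)²cos(2α))'. -/
open Real

theorem bogomolny_completion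
    (m A r : ℝ) (hm : 0 < m) (hA : 0 < A) (hr : 0 < r)
    (κ α : ℝ → ℝ) (hκ : Differentiable ℝ κ) (hα : Differentiable ℝ α) :
    ∀ x, r * (4 * A * (deriv κ x) ^ 2 + 2 * (1 - κ x ^ 2) ^ 2 * (deriv α x) ^ 2
        + 2 * m ^ 2 * (1 - κ x ^ 2) ^ 2 * Real.sin (2 * α x) ^ 2
        + 4 * m ^ 2 * κ x ^ 2 * (1 - κ x ^ 2) ^ 2 * Real.cos (2 * α x) ^ 2 / A)
      = r * (4 * A * (deriv κ x - (m / A) * κ x * (1 - κ x ^ 2) * Real.cos (2 * α x)) ^ 2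
          + 2 * (1 - κ x ^ 2) ^ 2 * (deriv α x - m * Real.sin (2 * α x)) ^ 2)
        - 2 * m * r * deriv (fun y => (1 - κ y ^ 2) ^ 2 * Real.cos (2 * α y)) x := by
  intro x
  have hk := (hκ x).hasDerivAt
  have ha := (hα x).hasDerivAt
  have h1 : HasDerivAt (fun y => (1 - κ y ^ 2) ^ 2 * Real.cos (2 * α y))
      (2 * (1 - κ x ^ 2) * (-(2 * κ x * deriv κ x)) * Real.cos (2 * α x)
        + (1 - κ x ^ 2) ^ 2 * (-Real.sin (2 * α x) * (2 * deriv α x))) x := by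
    have hA1 : HasDerivAt (fun y => (1 - κ y ^ 2) ^ 2)
        (2 * (1 - κ x ^ 2) * (-(2 * κ x * deriv κ x))) x := by
      have := ((hasDerivAt_const x (1:ℝ)).sub (hk.pow 2))
      simpa using this.fun_pow 2
    have hA2 : HasDerivAt (fun y => Real.cos (2 * α y))
        (-Real.sin (2 * α x) * (2 * deriv α x)) x := by
      have h2a : HasDerivAt (fun y => 2 * α y) (2 * deriv α x) x := by
        simpa using (ha.const_mul 2)
      exact (Real.hasDerivAt_cos (2 * α x)).comp x h2a
    exact hA1.mul hA2
  rw [h1.deriv]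
  have hs : Real.sin (2 * α x) ^ 2 = 1 - Real.cos (2 * α x) ^ 2 := by
    have := Real.sin_sq_add_cos_sq (2 * α x); linarith
  field_simp
  ring_nf
end

section
/- Let m, A, r > 0 and let κ, α : ℝ → ℝ be smooth with boundary conditions κ(±∞) = 0, α(-∞) = 0, α(+∞) = π/2 (as limits). Then the kink energy E(κ,α) = ∫_{-∞}^{∞} r{4A(κ')² + 2(1-κ²)²(α')² + 2m²(1-κ²)²sin²(2α) + 4m²κ²(1-κ²)²cos²(2α)/A} dx satisfies E(κ,α) ≥ 4mr. -/
open Real Filter MeasureTheory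

theorem kink_energy_lower_bound
    (m A r : ℝ) (hm : 0 < m) (hA : 0 < A) (hr : 0 < r)
    (κ α : ℝ → ℝ) (hκ : ContDiff ℝ 1 κ) (hα : ContDiff ℝ 1 α)
    (e : ℝ → ℝ)
    (he : ∀ x, e x = r * (4 * A * (deriv κ x) ^ 2 + 2 * (1 - κ x ^ 2) ^ 2 * (deriv α x) ^ 2
        + 2 * m ^ 2 * (1 - κ x ^ 2) ^ 2 * Real.sin (2 * α x) ^ 2
        + 4 * m ^ 2 * κ x ^ 2 * (1 - κ x ^ 2) ^ 2 * Real.cos (2 * α x) ^ 2 / A))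
    (hint : Integrable e)
    (hκbot : Tendsto κ atBot (nhds 0)) (hκtop : Tendsto κ atTop (nhds 0))
    (hαbot : Tendsto α atBot (nhds 0)) (hαtop : Tendsto α atTop (nhds (Real.pi / 2))) :
    4 * m * r ≤ ∫ x, e x := by
  have hκd : Differentiable ℝ κ := hκ.differentiable one_ne_zero
  have hαd : Differentiable ℝ α := hα.differentiable one_ne_zero
  have hκc : Continuous (deriv κ) := hκ.continuous_deriv le_rfl
  have hαc : Continuous (deriv α) := hα.continuous_deriv le_rfl
  set W : ℝ → ℝ := fun x => -m * Real.cos (2 * α x) * (1 - κ x ^ 2) ^ 2 with hW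
  set D : ℝ → ℝ := fun x => 2 * m * (1 - κ x ^ 2) ^ 2 * Real.sin (2 * α x) * deriv α x
      + 4 * m * κ x * deriv κ x * (1 - κ x ^ 2) * Real.cos (2 * α x) with hD
  -- W has derivative D
  have hWderiv : ∀ x, HasDerivAt W (D x) x := by
    intro x
    have h1 : HasDerivAt (fun x => 2 * α x) (2 * deriv α x) x :=
      (hαd x).hasDerivAt.const_mul 2
    have h2 : HasDerivAt (fun x => Real.cos (2 * α x))
        (-Real.sin (2 * α x) * (2 * deriv α x)) x :=
      by have := (Real.hasDerivAt_cos (2 * α x)).comp x h1; exact this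
    have h3 : HasDerivAt (fun x => 1 - κ x ^ 2) (0 - 2 * κ x ^ 1 * deriv κ x) x :=
      (hasDerivAt_const x (1 : ℝ)).sub (((hκd x).hasDerivAt.pow 2))
    have h4 : HasDerivAt (fun x => (1 - κ x ^ 2) ^ 2)
        (2 * (1 - κ x ^ 2) ^ 1 * (0 - 2 * κ x ^ 1 * deriv κ x)) x := h3.pow 2
    have h5 : HasDerivAt W _ x := (h2.const_mul (-m)).mul h4
    convert h5 using 1
    simp only [hD]
    ring
  have hDcont : Continuous D := by
    simp only [hD]
    fun_prop
  -- pointwise Bogomolny bound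
  have hpt : ∀ x, 2 * r * D x ≤ e x := by
    intro x
    rw [he x]
    set k := κ x
    set k' := deriv κ x
    set a' := deriv α x
    set c := Real.cos (2 * α x)
    set s := Real.sin (2 * α x)
    have hAne : A ≠ 0 := ne_of_gt hA
    have key : 4 * m ^ 2 * k ^ 2 * (1 - k ^ 2) ^ 2 * c ^ 2 / A
        = A * (2 * m * k * (1 - k ^ 2) * c / A) ^ 2 := by
      field_simp; ring
    rw [key]
    have hDx : D x = 2 * m * (1 - k ^ 2) ^ 2 * s * a' + 4 * m * k * k' * (1 - k ^ 2) * c := rfl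
    rw [hDx]
    have h1 := mul_nonneg hA.le (sq_nonneg (2 * k' - 2 * m * k * (1 - k ^ 2) * c / A))
    have h2 := sq_nonneg ((1 - k ^ 2) * a' - m * (1 - k ^ 2) * s)
    have h4 : A * (2 * k' - 2 * m * k * (1 - k ^ 2) * c / A) ^ 2
        = 4 * A * k' ^ 2 - 8 * m * k * k' * (1 - k ^ 2) * c
          + A * (2 * m * k * (1 - k ^ 2) * c / A) ^ 2 := by
      field_simp
      ring
    rw [h4] at h1
    nlinarith [mul_nonneg hr.le h1, mul_nonneg hr.le h2]
  have hepos : ∀ x, 0 ≤ e x := by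
    intro x
    rw [he x]
    positivity
  -- integral bound over [-T, T]
  have hbound : ∀ T : ℝ, 0 ≤ T → 2 * r * (W T - W (-T)) ≤ ∫ x, e x := by
    intro T hT
    have hle : (-T : ℝ) ≤ T := by linarith
    have hDint : IntervalIntegrable D volume (-T) T :=
      hDcont.intervalIntegrable _ _
    have heq : ∫ x in (-T)..T, D x = W T - W (-T) :=
      intervalIntegral.integral_eq_sub_of_hasDerivAt (fun x _ => hWderiv x) hDint
    have h1 : 2 * r * (W T - W (-T)) = ∫ x in (-T)..T, 2 * r * D x := by
      rw [intervalIntegral.integral_const_mul, heq]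
    rw [h1]
    have h2 : (∫ x in (-T)..T, 2 * r * D x) ≤ ∫ x in (-T)..T, e x := by
      apply intervalIntegral.integral_mono_on hle
        (hDint.const_mul _) hint.intervalIntegrable
      intro x _
      exact hpt x
    refine h2.trans ?_
    rw [intervalIntegral.integral_of_le hle]
    exact setIntegral_le_integral hint (Filter.Eventually.of_forall hepos)
  -- limits of W
  have hWtop : Tendsto W atTop (nhds m) := by
    have h1 : Tendsto (fun x => Real.cos (2 * α x)) atTop (nhds (Real.cos (2 * (π / 2)))) :=
      (Real.continuous_cos.tendsto _).comp (hαtop.const_mul 2)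
    have h2 : Tendsto (fun x => (1 - κ x ^ 2) ^ 2) atTop (nhds ((1 - (0:ℝ) ^ 2) ^ 2)) :=
      ((tendsto_const_nhds.sub (hκtop.pow 2)).pow 2)
    have := (h1.const_mul (-m)).mul h2
    have hval : -m * Real.cos (2 * (π / 2)) * (1 - (0:ℝ) ^ 2) ^ 2 = m := by
      have : 2 * (π / 2) = π := by ring
      rw [this, Real.cos_pi]; ring
    rw [hval] at this
    exact this
  have hWbot : Tendsto W atBot (nhds (-m)) := by
    have h1 : Tendsto (fun x => Real.cos (2 * α x)) atBot (nhds (Real.cos (2 * 0))) :=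
      (Real.continuous_cos.tendsto _).comp (hαbot.const_mul 2)
    have h2 : Tendsto (fun x => (1 - κ x ^ 2) ^ 2) atBot (nhds ((1 - (0:ℝ) ^ 2) ^ 2)) :=
      ((tendsto_const_nhds.sub (hκbot.pow 2)).pow 2)
    have := (h1.const_mul (-m)).mul h2
    have hval : -m * Real.cos (2 * 0) * (1 - (0:ℝ) ^ 2) ^ 2 = -m := by
      norm_num
    rw [hval] at this
    exact this
  -- take limit T → ∞
  have htend : Tendsto (fun T => 2 * r * (W T - W (-T))) atTop (nhds (4 * m * r)) := by
    have hneg : Tendsto (fun T : ℝ => W (-T)) atTop (nhds (-m)) :=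
      hWbot.comp tendsto_neg_atTop_atBot
    have := ((hWtop.sub hneg).const_mul (2 * r))
    have hval : 2 * r * (m - -m) = 4 * m * r := by ring
    rw [hval] at this
    exact this
  refine le_of_tendsto htend ?_
  filter_upwards [eventually_ge_atTop (0:ℝ)] with T hT
  exact hbound T hT
end

section
/- Equality E(κ,α) = 4mr in the Bogomolny bound holds if and only if κ and α satisfy the BPS equations κ' = (m/A)κ(1-κ²)cos(2α) and α' = m·sin(2α) everywhere. -/
open Real Filter MeasureTheory

set_option maxHeartbeats 1000000 in
theorem kink_energy_saturation_iff_bps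
    (m A r : ℝ) (hm : 0 < m) (hA : 0 < A) (hr : 0 < r)
    (κ α : ℝ → ℝ) (hκ : ContDiff ℝ 1 κ) (hα : ContDiff ℝ 1 α)
    (e : ℝ → ℝ)
    (he : ∀ x, e x = r * (4 * A * (deriv κ x) ^ 2 + 2 * (1 - κ x ^ 2) ^ 2 * (deriv α x) ^ 2
        + 2 * m ^ 2 * (1 - κ x ^ 2) ^ 2 * Real.sin (2 * α x) ^ 2
        + 4 * m ^ 2 * κ x ^ 2 * (1 - κ x ^ 2) ^ 2 * Real.cos (2 * α x) ^ 2 / A))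
    (hint : Integrable e)
    (hκbot : Tendsto κ atBot (nhds 0)) (hκtop : Tendsto κ atTop (nhds 0))
    (hαbot : Tendsto α atBot (nhds 0)) (hαtop : Tendsto α atTop (nhds (Real.pi / 2))) :
    (∫ x, e x) = 4 * m * r ↔
      (∀ x, deriv κ x = (m / A) * κ x * (1 - κ x ^ 2) * Real.cos (2 * α x) ∧
            deriv α x = m * Real.sin (2 * α x)) := by
  have hκd : ∀ x, HasDerivAt κ (deriv κ x) x := fun x => (hκ.differentiable one_ne_zero x).hasDerivAt
  have hαd : ∀ x, HasDerivAt α (deriv α x) x := fun x => (hα.differentiable one_ne_zero x).hasDerivAt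
  have hκc : Continuous κ := hκ.continuous
  have hαc : Continuous α := hα.continuous
  have hκdc : Continuous (deriv κ) := hκ.continuous_deriv le_rfl
  have hαdc : Continuous (deriv α) := hα.continuous_deriv le_rfl
  set B : ℝ → ℝ := fun x => (m / A) * κ x * (1 - κ x ^ 2) * Real.cos (2 * α x) with hB
  set Cf : ℝ → ℝ := fun x => m * Real.sin (2 * α x) with hCf
  set S : ℝ → ℝ := fun x => r * (4 * A * (deriv κ x - B x) ^ 2
      + 2 * (1 - κ x ^ 2) ^ 2 * (deriv α x - Cf x) ^ 2) with hS
  set G : ℝ → ℝ := fun x => -2 * m * (1 - κ x ^ 2) ^ 2 * Real.cos (2 * α x) with hG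
  set G' : ℝ → ℝ := fun x => 8 * m * deriv κ x * κ x * (1 - κ x ^ 2) * Real.cos (2 * α x)
      + 4 * m * (1 - κ x ^ 2) ^ 2 * deriv α x * Real.sin (2 * α x) with hG'
  -- derivative of G
  have hg : ∀ x, HasDerivAt (fun y => 1 - κ y ^ 2) (-(2 * κ x * deriv κ x)) x := by
    intro x
    have := ((hκd x).fun_pow 2).const_sub 1
    refine this.congr_deriv ?_
    ring
  have hcos : ∀ x, HasDerivAt (fun y => Real.cos (2 * α y))
      (-Real.sin (2 * α x) * (2 * deriv α x)) x := by
    intro x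
    exact (Real.hasDerivAt_cos (2 * α x)).comp x ((hαd x).const_mul 2)
  have hGd : ∀ x, HasDerivAt G (G' x) x := by
    intro x
    have h4 := (((hg x).fun_pow 2).const_mul (-2 * m)).fun_mul (hcos x)
    refine h4.congr_deriv ?_
    simp only [hG']
    ring
  -- pointwise energy identity
  have hES : ∀ x, e x = S x + r * G' x := by
    intro x
    rw [he]
    simp only [hS, hG', hB, hCf]
    field_simp
    ring
  -- pointwise bound |r * G'| ≤ e
  have key1 : ∀ u v : ℝ, |8 * m * u * v| ≤ 4 * A * u ^ 2 + 4 * m ^ 2 * v ^ 2 / A := by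
    intro u v
    have e1 : 4 * A * u ^ 2 + 4 * m ^ 2 * v ^ 2 / A + 8 * m * u * v
        = (2 * A * u + 2 * m * v) ^ 2 / A := by field_simp; ring
    have e2 : 4 * A * u ^ 2 + 4 * m ^ 2 * v ^ 2 / A - 8 * m * u * v
        = (2 * A * u - 2 * m * v) ^ 2 / A := by field_simp; ring
    have p1 : 0 ≤ (2 * A * u + 2 * m * v) ^ 2 / A := by positivity
    have p2 : 0 ≤ (2 * A * u - 2 * m * v) ^ 2 / A := by positivity
    rw [abs_le]
    constructor <;> linarith
  have key2 : ∀ y u v : ℝ, |4 * m * y ^ 2 * u * v| ≤ 2 * y ^ 2 * u ^ 2 + 2 * m ^ 2 * y ^ 2 * v ^ 2 := by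
    intro y u v
    rw [abs_le]
    constructor <;> nlinarith [sq_nonneg (y * (u - m * v)), sq_nonneg (y * (u + m * v))]
  have hbound : ∀ x, |r * G' x| ≤ e x := by
    intro x
    rw [abs_mul, abs_of_pos hr, he]
    have h1 := key1 (deriv κ x) (κ x * (1 - κ x ^ 2) * Real.cos (2 * α x))
    have h2 := key2 (1 - κ x ^ 2) (deriv α x) (Real.sin (2 * α x))
    have habs : |G' x| ≤ |8 * m * deriv κ x * (κ x * (1 - κ x ^ 2) * Real.cos (2 * α x))|
        + |4 * m * (1 - κ x ^ 2) ^ 2 * deriv α x * Real.sin (2 * α x)| := by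
      simp only [hG']
      refine le_trans (le_of_eq (by ring_nf)) (abs_add_le _ _)
    have hmono : |G' x| ≤ 4 * A * (deriv κ x) ^ 2
        + 4 * m ^ 2 * (κ x * (1 - κ x ^ 2) * Real.cos (2 * α x)) ^ 2 / A
        + (2 * (1 - κ x ^ 2) ^ 2 * (deriv α x) ^ 2
          + 2 * m ^ 2 * (1 - κ x ^ 2) ^ 2 * Real.sin (2 * α x) ^ 2) := by
      calc |G' x| ≤ _ := habs
        _ ≤ _ := add_le_add h1 h2
    have := mul_le_mul_of_nonneg_left hmono hr.le
    refine le_trans this (le_of_eq ?_)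
    rw [mul_pow, mul_pow]
    ring
  have hG'cont : Continuous G' := by
    simp only [hG']
    fun_prop
  have hrG'int : Integrable (fun x => r * G' x) := by
    refine hint.mono' ((continuous_const.mul hG'cont).aestronglyMeasurable) ?_
    exact ae_of_all _ fun x => by rw [Real.norm_eq_abs]; exact hbound x
  have hG'int : Integrable G' := by
    have h := hrG'int.const_mul r⁻¹
    refine h.congr (ae_of_all _ fun x => ?_)
    field_simp
  -- limits of G
  have hGtop : Tendsto G atTop (nhds (2 * m)) := by
    have h1 : Tendsto (fun x => -2 * m * (1 - κ x ^ 2) ^ 2) atTop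
        (nhds (-2 * m * (1 - (0:ℝ) ^ 2) ^ 2)) :=
      Tendsto.const_mul _ ((tendsto_const_nhds.sub (hκtop.pow 2)).pow 2)
    have h2 : Tendsto (fun x => Real.cos (2 * α x)) atTop (nhds (Real.cos (2 * (Real.pi / 2)))) :=
      (Real.continuous_cos.tendsto _).comp (hαtop.const_mul 2)
    have := h1.mul h2
    have heq : -2 * m * (1 - (0:ℝ) ^ 2) ^ 2 * Real.cos (2 * (Real.pi / 2)) = 2 * m := by
      rw [show 2 * (Real.pi / 2) = Real.pi by ring, Real.cos_pi]; ring
    rw [heq] at this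
    exact this
  have hGbot : Tendsto G atBot (nhds (-(2 * m))) := by
    have h1 : Tendsto (fun x => -2 * m * (1 - κ x ^ 2) ^ 2) atBot
        (nhds (-2 * m * (1 - (0:ℝ) ^ 2) ^ 2)) :=
      Tendsto.const_mul _ ((tendsto_const_nhds.sub (hκbot.pow 2)).pow 2)
    have h2 : Tendsto (fun x => Real.cos (2 * α x)) atBot (nhds (Real.cos (2 * (0:ℝ)))) :=
      (Real.continuous_cos.tendsto _).comp (hαbot.const_mul 2)
    have := h1.mul h2
    have heq : -2 * m * (1 - (0:ℝ) ^ 2) ^ 2 * Real.cos (2 * (0:ℝ)) = -(2 * m) := by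
      norm_num
    rw [heq] at this
    exact this
  have hintG' : ∫ x, G' x = 4 * m := by
    have := integral_of_hasDerivAt_of_tendsto hGd hG'int hGbot hGtop
    rw [this]; ring
  have hSint : Integrable S := by
    have hSeq : S = fun x => e x - r * G' x := funext fun x => by rw [hES x]; ring
    rw [hSeq]
    exact hint.sub hrG'int
  have hsplit : (∫ x, e x) = (∫ x, S x) + 4 * m * r := by
    calc (∫ x, e x) = ∫ x, (S x + r * G' x) := by
          refine integral_congr_ae (ae_of_all _ fun x => hES x)
      _ = (∫ x, S x) + ∫ x, r * G' x := integral_add hSint hrG'int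
      _ = (∫ x, S x) + r * ∫ x, G' x := by rw [integral_const_mul r G']
      _ = (∫ x, S x) + 4 * m * r := by rw [hintG']; ring
  constructor
  · -- forward direction
    intro hE
    have hSzero : (∫ x, S x) = 0 := by linarith
    have hSnonneg : ∀ x, 0 ≤ S x := by
      intro x
      simp only [hS]
      have h1 : (0:ℝ) ≤ 4 * A * (deriv κ x - B x) ^ 2 :=
        mul_nonneg (by linarith) (sq_nonneg _)
      have h2 : (0:ℝ) ≤ 2 * (1 - κ x ^ 2) ^ 2 * (deriv α x - Cf x) ^ 2 := by positivity
      exact mul_nonneg hr.le (by linarith)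
    have hScont : Continuous S := by
      simp only [hS, hB, hCf]
      fun_prop
    have hae : S =ᵐ[volume] 0 :=
      (integral_eq_zero_iff_of_nonneg_ae (ae_of_all _ hSnonneg) hSint).mp hSzero
    have hSzeroAll : S = fun _ => 0 := (hScont.ae_eq_iff_eq volume continuous_zero).mp hae
    have hsum0 : ∀ x, 4 * A * (deriv κ x - B x) ^ 2
        + 2 * (1 - κ x ^ 2) ^ 2 * (deriv α x - Cf x) ^ 2 = 0 := by
      intro x
      have h0 : S x = 0 := by rw [hSzeroAll]
      simp only [hS] at h0
      rcases mul_eq_zero.mp h0 with h | h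
      · exact absurd h hr.ne'
      · exact h
    have hp2 : ∀ x, (deriv κ x - B x) ^ 2 = 0 := by
      intro x
      have h2 : (0:ℝ) ≤ 2 * (1 - κ x ^ 2) ^ 2 * (deriv α x - Cf x) ^ 2 := by positivity
      have h3 : 4 * A * (deriv κ x - B x) ^ 2 = 0 := by
        have h1 : (0:ℝ) ≤ 4 * A * (deriv κ x - B x) ^ 2 :=
          mul_nonneg (by linarith) (sq_nonneg _)
        linarith [hsum0 x]
      rcases mul_eq_zero.mp h3 with h | h
      · exact absurd h (by positivity : (4:ℝ) * A ≠ 0)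
      · exact h
    have hBeq : ∀ x, deriv κ x = B x := by
      intro x
      have := pow_eq_zero_iff (n := 2) (by norm_num) |>.mp (hp2 x)
      linarith [sub_eq_zero.mp this]
    have hprod : ∀ x, (1 - κ x ^ 2) * (deriv α x - Cf x) = 0 := by
      intro x
      have hp : ((1 - κ x ^ 2) * (deriv α x - Cf x)) ^ 2 = 0 := by
        linear_combination (1/2) * hsum0 x - 2 * A * hp2 x
      exact pow_eq_zero_iff (n := 2) (by norm_num) |>.mp hp
    -- show 1 - κ² never vanishes via ODE uniqueness
    set c : ℝ → ℝ := fun x => -2 * (m / A) * κ x ^ 2 * Real.cos (2 * α x) with hc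
    have hccont : Continuous c := by simp only [hc]; fun_prop
    set Cint : ℝ → ℝ := fun x => ∫ t in (0:ℝ)..x, c t with hCint
    have hCd : ∀ x, HasDerivAt Cint (c x) x := fun x =>
      (hccont.integral_hasStrictDerivAt 0 x).hasDerivAt
    set H : ℝ → ℝ := fun x => (1 - κ x ^ 2) * Real.exp (-(Cint x)) with hH
    have hHd : ∀ x, HasDerivAt H 0 x := by
      intro x
      have h1 : HasDerivAt (fun y => 1 - κ y ^ 2) (c x * (1 - κ x ^ 2)) x := by
        have := hg x
        rw [hBeq x] at this
        convert this using 1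
        simp only [hc, hB]
        ring
      have h2 : HasDerivAt (fun y => Real.exp (-(Cint y))) (Real.exp (-(Cint x)) * (-(c x))) x :=
        (Real.hasDerivAt_exp _).comp x ((hCd x).neg)
      have := h1.fun_mul h2
      refine this.congr_deriv ?_
      ring
    have hHconst : ∀ x y, H x = H y :=
      fun x y => is_const_of_deriv_eq_zero (fun z => (hHd z).differentiableAt)
        (fun z => (hHd z).deriv) x y
    have hker : ∀ x, 1 - κ x ^ 2 ≠ 0 := by
      intro x0 h0
      have hH0 : ∀ y, H y = 0 := by
        intro y
        rw [hHconst y x0]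
        simp [hH, h0]
      have hg0 : ∀ y, 1 - κ y ^ 2 = 0 := by
        intro y
        have := hH0 y
        simp only [hH] at this
        exact (mul_eq_zero.mp this).resolve_right (Real.exp_ne_zero _)
      have h1 : Tendsto (fun y => 1 - κ y ^ 2) atBot (nhds (1 - (0:ℝ) ^ 2)) :=
        tendsto_const_nhds.sub (hκbot.pow 2)
      have h2 : Tendsto (fun y => 1 - κ y ^ 2) atBot (nhds 0) := by
        have : (fun y => 1 - κ y ^ 2) = fun _ => (0:ℝ) := funext hg0
        rw [this]
        exact tendsto_const_nhds
      have := tendsto_nhds_unique h1 h2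
      norm_num at this
    intro x
    refine ⟨hBeq x, ?_⟩
    have := (mul_eq_zero.mp (hprod x)).resolve_left (hker x)
    have := sub_eq_zero.mp this
    exact this
  · -- reverse direction
    intro hbps
    have hS0 : ∀ x, S x = 0 := by
      intro x
      have h1 : deriv κ x - B x = 0 := sub_eq_zero_of_eq (hbps x).1
      have h2 : deriv α x - Cf x = 0 := sub_eq_zero_of_eq (hbps x).2
      simp only [hS]
      rw [h1, h2]
      ring
    have : (∫ x, S x) = 0 := by
      have : S = fun _ => (0:ℝ) := funext hS0
      rw [this, integral_zero]
    linarith [hsplit]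
end

section
/- For any m > 0 and x₀ ∈ ℝ, the function α(x) = arctan(e^{2m(x-x₀)}) satisfies the differential equation α'(x) = m·sin(2α(x)) for all x ∈ ℝ, together with lim_{x→-∞} α(x) = 0 and lim_{x→+∞} α(x) = π/2. -/
open Real Filter

theorem arctan_exp_solves_alpha_ode
    (m x₀ : ℝ) (hm : 0 < m) :
    (∀ x, deriv (fun y => Real.arctan (Real.exp (2 * m * (y - x₀)))) x
        = m * Real.sin (2 * Real.arctan (Real.exp (2 * m * (x - x₀))))) ∧
    Tendsto (fun x => Real.arctan (Real.exp (2 * m * (x - x₀)))) atBot (nhds 0) ∧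
    Tendsto (fun x => Real.arctan (Real.exp (2 * m * (x - x₀)))) atTop (nhds (Real.pi / 2)) := by
  refine ⟨?_, ?_, ?_⟩
  · intro x
    set t := Real.exp (2 * m * (x - x₀)) with ht
    have ht0 : 0 < t := Real.exp_pos _
    have h1 : HasDerivAt (fun y : ℝ => 2 * m * (y - x₀)) (2 * m) x := by
      simpa using ((hasDerivAt_id x).sub_const x₀).const_mul (2 * m)
    have h2 : HasDerivAt (fun y => Real.exp (2 * m * (y - x₀))) (t * (2 * m)) x :=
      (Real.hasDerivAt_exp _).comp x h1
    have h3 : HasDerivAt (fun y => Real.arctan (Real.exp (2 * m * (y - x₀))))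
        ((1 / (1 + t ^ 2)) * (t * (2 * m))) x :=
      by have := (Real.hasDerivAt_arctan t).comp x h2; exact this
    rw [h3.deriv]
    rw [Real.sin_two_mul, Real.sin_arctan, Real.cos_arctan]
    have hs : Real.sqrt (1 + t ^ 2) * Real.sqrt (1 + t ^ 2) = 1 + t ^ 2 :=
      Real.mul_self_sqrt (by positivity)
    field_simp
    ring_nf
    exact Real.sq_sqrt (by positivity)
  · have h1 : Tendsto (fun x : ℝ => 2 * m * (x - x₀)) atBot atBot := by
      exact Tendsto.const_mul_atBot (by linarith) (tendsto_atBot_add_const_right _ _ tendsto_id)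
    have h2 := Real.tendsto_exp_atBot.comp h1
    have := (Real.continuous_arctan.tendsto 0).comp h2
    simpa [Function.comp_def] using this
  · have h1 : Tendsto (fun x : ℝ => 2 * m * (x - x₀)) atTop atTop := by
      exact Tendsto.const_mul_atTop (by linarith) (tendsto_atTop_add_const_right _ _ tendsto_id)
    have h2 := Real.tendsto_exp_atTop.comp h1
    exact Real.tendsto_arctan_atTop.mono_right nhdsWithin_le_nhds |>.comp h2
end

section
/- For m, A > 0, q > 0, and x₀ ∈ ℝ, define σ(x) = e^{(2m/A)x}/(1+e^{4mx})^{1/A}, α(x) = arctan(e^{2m(x-x₀)}), and κ(x) = √(q·σ(x-x₀)/(1 + q·σ(x-x₀))). Then κ satisfies the BPS equation κ'(x) = (m/A)·κ(x)·(1-κ(x)²)·cos(2α(x)) for all x ∈ ℝ. -/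
open Real

theorem explicit_kappa_solves_bps
    (m A q x₀ : ℝ) (hm : 0 < m) (hA : 0 < A) (hq : 0 < q)
    (σ : ℝ → ℝ)
    (hσ : ∀ x, σ x = Real.exp ((2 * m / A) * x) / (1 + Real.exp (4 * m * x)) ^ (1 / A))
    (α : ℝ → ℝ) (hα : ∀ x, α x = Real.arctan (Real.exp (2 * m * (x - x₀))))
    (κ : ℝ → ℝ)
    (hκ : ∀ x, κ x = Real.sqrt (q * σ (x - x₀) / (1 + q * σ (x - x₀)))) :
    ∀ x, deriv κ x = (m / A) * κ x * (1 - κ x ^ 2) * Real.cos (2 * α x) := by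
  intro x
  have hA0 : A ≠ 0 := ne_of_gt hA
  set E1 : ℝ := Real.exp ((2*m/A) * (x - x₀)) with hE1
  set E4 : ℝ := Real.exp (4*m*(x - x₀)) with hE4def
  have hE4pos : (0:ℝ) < 1 + E4 := by positivity
  set P : ℝ := (1 + E4) ^ (1/A) with hP
  have hPpos : (0:ℝ) < P := Real.rpow_pos_of_pos hE4pos _
  set f : ℝ → ℝ := fun y => q * Real.exp ((2*m/A)*(y-x₀)) / (1 + Real.exp (4*m*(y-x₀))) ^ (1/A) with hf
  have hκf : κ = fun y => Real.sqrt (f y / (1 + f y)) := by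
    funext y
    rw [hκ, hσ]
    simp [hf, mul_div_assoc]
  have hFpos : 0 < f x := by
    rw [hf]
    have : (0:ℝ) < 1 + Real.exp (4*m*(x-x₀)) := by positivity
    exact div_pos (by positivity) (Real.rpow_pos_of_pos this _)
  have hfx : f x = q * E1 / P := rfl
  set F : ℝ := f x with hFdef
  have hDpos : 0 < 1 + F := by linarith
  -- derivative of exp((2m/A)(y-x₀))
  have hd1 : HasDerivAt (fun y => Real.exp ((2*m/A)*(y-x₀))) ((2*m/A) * E1) x := by
    have h := (((hasDerivAt_id x).sub_const x₀).const_mul (2*m/A)).exp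
    convert h using 1
    · rfl
    rw [hE1, mul_one]; exact mul_comm _ _
  have hd4 : HasDerivAt (fun y => Real.exp (4*m*(y-x₀))) ((4*m) * E4) x := by
    have h := (((hasDerivAt_id x).sub_const x₀).const_mul (4*m)).exp
    convert h using 1
    · rfl
    rw [hE4def, mul_one]; exact mul_comm _ _
  have hPsub : (1 + E4) ^ (1/A - 1) = P / (1 + E4) := by
    rw [hP, Real.rpow_sub hE4pos, Real.rpow_one]
  set dP : ℝ := (1/A) * (P / (1 + E4)) * ((4*m) * E4) with hdPdef
  have hdP' : HasDerivAt (fun y => (1 + Real.exp (4*m*(y-x₀))) ^ (1/A)) dP x := by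
    have h := ((hasDerivAt_const x (1:ℝ)).add hd4).rpow_const (p := 1/A)
      (Or.inl (ne_of_gt hE4pos))
    convert h using 1
    · rfl
    rw [hdPdef]; simp only [Pi.add_apply]; rw [hPsub]
    ring
  set F' : ℝ := (q * ((2*m/A) * E1) * P - q * E1 * dP) / P ^ 2 with hF'
  have hdf : HasDerivAt f F' x := by
    exact (hd1.const_mul q).div hdP' (ne_of_gt hPpos)
  set R' : ℝ := (F' * (1 + F) - F * F') / (1 + F) ^ 2 with hR'
  have hdD : HasDerivAt (fun y => 1 + f y) F' x := by
    have := (hasDerivAt_const x (1:ℝ)).add hdf; rw [zero_add] at this; exact this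
  have hdr : HasDerivAt (fun y => f y / (1 + f y)) R' x :=
    hdf.div hdD (ne_of_gt hDpos)
  have hrx : 0 < F / (1 + F) := div_pos hFpos hDpos
  have hdκ : HasDerivAt κ (R' / (2 * Real.sqrt (F / (1 + F)))) x := by
    rw [hκf]
    exact hdr.sqrt (ne_of_gt hrx)
  have hκx : κ x = Real.sqrt (F / (1 + F)) := by rw [hκf]
  have hκpos : 0 < κ x := by rw [hκx]; exact Real.sqrt_pos.mpr hrx
  have hκsq : κ x ^ 2 = F / (1 + F) := by
    rw [hκx, Real.sq_sqrt (le_of_lt hrx)]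
  have hderiv : deriv κ x = R' / (2 * κ x) := by
    rw [hκx]; exact hdκ.deriv
  -- cosine
  have ht2 : Real.exp (2*m*(x-x₀)) ^ 2 = E4 := by
    rw [hE4def, ← Real.exp_nat_mul]
    ring_nf
  have ht2pos : (0:ℝ) < 1 + Real.exp (2*m*(x-x₀)) ^ 2 := by positivity
  have hcos : Real.cos (2 * α x) = (1 - E4) / (1 + E4) := by
    rw [hα, Real.cos_two_mul, Real.cos_sq_arctan, ← ht2]
    field_simp
    ring
  rw [hderiv, hcos]
  -- reduce to an identity multiplied by κ x
  apply mul_right_cancel₀ (ne_of_gt hκpos)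
  have key1 : R' / (2 * κ x) * κ x = R' / 2 := by
    field_simp
  rw [key1, hκsq]
  have h1 : κ x * (1 - F / (1 + F)) * κ x = F / (1 + F) * (1 - F / (1 + F)) := by
    rw [← hκsq]; ring
  calc R' / 2 = m / A * (F / (1 + F) * (1 - F / (1 + F))) * ((1 - E4) / (1 + E4)) := by
        rw [hR', hF', hdPdef, hfx]
        have hE1pos : 0 < E1 := Real.exp_pos _
        have hne : 0 < q * E1 + P := by nlinarith [mul_pos hq hE1pos]
        have hne' : 0 < E1 * q + P := by linarith [mul_comm q E1]
        field_simp [hne.ne', hne'.ne', hPpos.ne', hE4pos.ne']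
        ring
    _ = m / A * κ x * (1 - F / (1 + F)) * ((1 - E4) / (1 + E4)) * κ x := by
        rw [← h1]; ring
end

section
/- Let κ, α : ℝ → ℝ be twice differentiable and satisfy the Euler–Lagrange equations, and define P = (1-κ²)²α' - m(1-κ²)²sin(2α) and Q = κ' - (m/A)κ(1-κ²)cos(2α). Then P and Q satisfy the first-order system P' = -2m·cos(2α)·P + 4mκ(1-κ²)·sin(2α)·Q and Q' = -(1/(A(1-κ²)³))·(κP² + m(1-κ²)³(1-3κ²)cos(2α)·Q), provided κ(x)² ≠ 1 for all x. -/
open Real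

theorem PQ_system
    (m A : ℝ) (hm : 0 < m) (hA : 0 < A)
    (κ α : ℝ → ℝ)
    (hκ : Differentiable ℝ κ) (hκ' : Differentiable ℝ (deriv κ))
    (hα : Differentiable ℝ α) (hα' : Differentiable ℝ (deriv α))
    (hne : ∀ x, κ x ^ 2 ≠ 1)
    (hEL1 : ∀ x, deriv (deriv κ) x =
      -(κ x * (1 - κ x ^ 2) / A) *
        ((deriv α x) ^ 2 + m ^ 2 * Real.sin (2 * α x) ^ 2
          - m ^ 2 * (1 - 3 * κ x ^ 2) * Real.cos (2 * α x) ^ 2 / A))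
    (hEL2 : ∀ x, deriv (fun y => (1 - κ y ^ 2) ^ 2 * deriv α y) x =
      m ^ 2 * (1 - κ x ^ 2) ^ 2 * (1 - 2 * κ x ^ 2 / A) * Real.sin (4 * α x))
    (P Q : ℝ → ℝ)
    (hP : ∀ x, P x = (1 - κ x ^ 2) ^ 2 * deriv α x - m * (1 - κ x ^ 2) ^ 2 * Real.sin (2 * α x))
    (hQ : ∀ x, Q x = deriv κ x - (m / A) * κ x * (1 - κ x ^ 2) * Real.cos (2 * α x)) :
    ∀ x, deriv P x = -2 * m * Real.cos (2 * α x) * P x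
          + 4 * m * κ x * (1 - κ x ^ 2) * Real.sin (2 * α x) * Q x ∧
        deriv Q x = -(1 / (A * (1 - κ x ^ 2) ^ 3)) *
          (κ x * P x ^ 2 + m * (1 - κ x ^ 2) ^ 3 * (1 - 3 * κ x ^ 2) * Real.cos (2 * α x) * Q x) := by
  intro x
  have hA0 : A ≠ 0 := ne_of_gt hA
  have hk1 : (1 : ℝ) - κ x ^ 2 ≠ 0 := by
    intro h; exact hne x (by linarith [sub_eq_zero.mp h])
  -- basic HasDerivAt facts at x
  have h1 : HasDerivAt κ (deriv κ x) x := (hκ x).hasDerivAt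
  have h3 : HasDerivAt α (deriv α x) x := (hα x).hasDerivAt
  have h4 : HasDerivAt (deriv α) (deriv (deriv α) x) x := (hα' x).hasDerivAt
  have h2 : HasDerivAt (deriv κ) (deriv (deriv κ) x) x := (hκ' x).hasDerivAt
  have hk2 : HasDerivAt (fun y => (1 - κ y ^ 2) ^ 2)
      (2 * (1 - κ x ^ 2) ^ 1 * (-(2 * κ x ^ 1 * deriv κ x))) x :=
    ((h1.pow 2).const_sub 1).pow 2
  have h2a : HasDerivAt (fun y => 2 * α y) (2 * deriv α x) x := h3.const_mul 2
  have hsin : HasDerivAt (fun y => Real.sin (2 * α y))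
      (Real.cos (2 * α x) * (2 * deriv α x)) x :=
    (Real.hasDerivAt_sin (2 * α x)).comp (h := fun y => 2 * α y) x h2a
  have hcos : HasDerivAt (fun y => Real.cos (2 * α y))
      (-Real.sin (2 * α x) * (2 * deriv α x)) x :=
    (Real.hasDerivAt_cos (2 * α x)).comp (h := fun y => 2 * α y) x h2a
  -- derivative of the first part of P
  have hF0 : HasDerivAt (fun y => (1 - κ y ^ 2) ^ 2 * deriv α y)
      (deriv (fun y => (1 - κ y ^ 2) ^ 2 * deriv α y) x) x :=
    (hk2.mul h4).differentiableAt.hasDerivAt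
  have hFP : HasDerivAt P
      (deriv (fun y => (1 - κ y ^ 2) ^ 2 * deriv α y) x
        - (m * ((2 * (1 - κ x ^ 2) ^ 1 * (-(2 * κ x ^ 1 * deriv κ x))) * Real.sin (2 * α x)
            + (1 - κ x ^ 2) ^ 2 * (Real.cos (2 * α x) * (2 * deriv α x))))) x := by
    have := hF0.sub ((hk2.mul hsin).const_mul m)
    have hPf : P = fun y => (fun y => (1 - κ y ^ 2) ^ 2 * deriv α y) y
        - m * ((1 - κ y ^ 2) ^ 2 * Real.sin (2 * α y)) := by
      funext y; rw [hP y]; ring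
    rw [hPf]; exact this
  have hFQ : HasDerivAt Q
      (deriv (deriv κ) x
        - (m / A) * ((deriv κ x * (1 - κ x ^ 2) + κ x * (-(2 * κ x ^ 1 * deriv κ x)))
            * Real.cos (2 * α x)
          + κ x * (1 - κ x ^ 2) * (-Real.sin (2 * α x) * (2 * deriv α x)))) x := by
    have hkk : HasDerivAt (fun y => κ y * (1 - κ y ^ 2))
        (deriv κ x * (1 - κ x ^ 2) + κ x * (-(2 * κ x ^ 1 * deriv κ x))) x :=
      h1.mul ((h1.pow 2).const_sub 1)
    have := h2.sub ((hkk.mul hcos).const_mul (m / A))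
    have hQf : Q = fun y => deriv κ y
        - (m / A) * (κ y * (1 - κ y ^ 2) * Real.cos (2 * α y)) := by
      funext y; rw [hQ y]; ring
    rw [hQf]
    exact this
  have hs4 : Real.sin (4 * α x) = 2 * Real.sin (2 * α x) * Real.cos (2 * α x) := by
    rw [show (4 : ℝ) * α x = 2 * (2 * α x) by ring, Real.sin_two_mul]
  constructor
  · rw [hFP.deriv, hEL2 x, hs4, hP x, hQ x]
    field_simp
    ring
  · rw [hFQ.deriv, hEL1 x, hP x, hQ x]
    field_simp
    ring
end

section
/- For m, A > 0, x₀ ∈ ℝ, q > 0, the pair α(x) = arctan(e^{2m(x-x₀)}), κ(x) = √(qσ(x-x₀)/(1+qσ(x-x₀))) with σ(x) = e^{(2m/A)x}/(1+e^{4mx})^{1/A} has kink energy exactly E(κ,α) = 4mr, where E(κ,α) = ∫_{-∞}^{∞} r{4A(κ')² + 2(1-κ²)²(α')² + 2m²(1-κ²)²sin²(2α) + 4m²κ²(1-κ²)²cos²(2α)/A} dx and r > 0. -/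
open Real MeasureTheory

noncomputable def kT (m x₀ x : ℝ) : ℝ := Real.exp (2*m*(x-x₀))
noncomputable def kS (m A x₀ x : ℝ) : ℝ :=
  Real.exp ((2*m/A)*(x-x₀)) / (1 + Real.exp (4*m*(x-x₀))) ^ (1/A)

lemma kT_pos (m x₀ x : ℝ) : 0 < kT m x₀ x := Real.exp_pos _

lemma kT_sq (m x₀ x : ℝ) : kT m x₀ x ^ 2 = Real.exp (4*m*(x-x₀)) := by
  rw [kT, sq, ← Real.exp_add]; congr 1; ring

lemma kS_pos (m A x₀ x : ℝ) : 0 < kS m A x₀ x :=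
  div_pos (Real.exp_pos _) (Real.rpow_pos_of_pos (by positivity) _)

lemma kT_hasDeriv (m x₀ x : ℝ) : HasDerivAt (kT m x₀) (2*m*kT m x₀ x) x := by
  have h : HasDerivAt (fun y => 2*m*(y-x₀)) (2*m) x := by
    simpa using ((hasDerivAt_id x).sub_const x₀).const_mul (2*m)
  unfold kT
  convert h.exp using 1; ring

lemma kS_hasDeriv (m A x₀ x : ℝ) (hA : 0 < A) :
    HasDerivAt (kS m A x₀)
      ((2*m/A) * kS m A x₀ x * ((1 - kT m x₀ x^2)/(1 + kT m x₀ x^2))) x := by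
  have hE : HasDerivAt (fun y => Real.exp (4*m*(y-x₀))) (4*m*Real.exp (4*m*(x-x₀))) x := by
    have h : HasDerivAt (fun y => 4*m*(y-x₀)) (4*m) x := by
      simpa using ((hasDerivAt_id x).sub_const x₀).const_mul (4*m)
    convert h.exp using 1; ring
  have hN : HasDerivAt (fun y => Real.exp ((2*m/A)*(y-x₀))) ((2*m/A)*Real.exp ((2*m/A)*(x-x₀))) x := by
    have h : HasDerivAt (fun y => (2*m/A)*(y-x₀)) (2*m/A) x := by
      simpa using ((hasDerivAt_id x).sub_const x₀).const_mul (2*m/A)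
    convert h.exp using 1; ring
  have hbase : (0:ℝ) < 1 + Real.exp (4*m*(x-x₀)) := by positivity
  have hD : HasDerivAt (fun y => (1 + Real.exp (4*m*(y-x₀))) ^ (1/A))
      ((4*m*Real.exp (4*m*(x-x₀))) * (1/A) * (1 + Real.exp (4*m*(x-x₀))) ^ (1/A - 1)) x :=
    (hE.const_add 1).rpow_const (Or.inl (ne_of_gt hbase))
  have hDne : (1 + Real.exp (4*m*(x-x₀))) ^ (1/A) ≠ 0 :=
    ne_of_gt (Real.rpow_pos_of_pos hbase _)
  have := hN.div hD hDne
  refine this.congr_deriv (Eq.symm ?_)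
  rw [Real.rpow_sub hbase, Real.rpow_one]
  have hPne : (1 + Real.exp (4*m*(x-x₀))) ^ (1/A) ≠ 0 := hDne
  rw [kS, kT_sq]
  field_simp
  ring

noncomputable def kSd (m A x₀ x : ℝ) : ℝ :=
  (2*m/A) * kS m A x₀ x * ((1 - kT m x₀ x^2)/(1 + kT m x₀ x^2))

noncomputable def kK (m A q x₀ x : ℝ) : ℝ :=
  Real.sqrt (q * kS m A x₀ x / (1 + q * kS m A x₀ x))

noncomputable def kKd (m A q x₀ x : ℝ) : ℝ :=
  q * kSd m A x₀ x / (1 + q * kS m A x₀ x)^2 / (2 * kK m A q x₀ x)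

lemma kden_pos (m A q x₀ x : ℝ) (hq : 0 < q) : 0 < 1 + q * kS m A x₀ x := by
  have := kS_pos m A x₀ x; nlinarith

lemma kK_sq (m A q x₀ x : ℝ) (hq : 0 < q) :
    kK m A q x₀ x ^ 2 = q * kS m A x₀ x / (1 + q * kS m A x₀ x) :=
  Real.sq_sqrt (le_of_lt (div_pos (mul_pos hq (kS_pos m A x₀ x)) (kden_pos m A q x₀ x hq)))

lemma kK_pos (m A q x₀ x : ℝ) (hq : 0 < q) : 0 < kK m A q x₀ x :=
  Real.sqrt_pos.2 (div_pos (mul_pos hq (kS_pos m A x₀ x)) (kden_pos m A q x₀ x hq))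

lemma kK_hasDeriv (m A q x₀ x : ℝ) (hA : 0 < A) (hq : 0 < q) :
    HasDerivAt (kK m A q x₀) (kKd m A q x₀ x) x := by
  have hden := kden_pos m A q x₀ x hq
  have hh : HasDerivAt (fun y => q * kS m A x₀ y / (1 + q * kS m A x₀ y))
      (q * kSd m A x₀ x / (1 + q * kS m A x₀ x)^2) x := by
    have h1 := (kS_hasDeriv m A x₀ x hA).const_mul q
    have h2 := ((kS_hasDeriv m A x₀ x hA).const_mul q).const_add 1
    have := h1.div h2 (ne_of_gt hden)
    refine this.congr_deriv (Eq.symm ?_)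
    rw [← kSd]
    field_simp
    ring
  have hne : q * kS m A x₀ x / (1 + q * kS m A x₀ x) ≠ 0 :=
    ne_of_gt (div_pos (mul_pos hq (kS_pos m A x₀ x)) hden)
  exact hh.sqrt hne

lemma kKd_sq (m A q x₀ x : ℝ) (hA : 0 < A) (hq : 0 < q) :
    kKd m A q x₀ x ^ 2 =
      m^2 * q * kS m A x₀ x * (1 - kT m x₀ x^2)^2
        / (A^2 * (1 + q * kS m A x₀ x)^3 * (1 + kT m x₀ x^2)^2) := by
  have hden := kden_pos m A q x₀ x hq
  have hS := kS_pos m A x₀ x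
  have hT := kT_pos m x₀ x
  have hQ : (0:ℝ) < 1 + kT m x₀ x^2 := by positivity
  have hK2 := kK_sq m A q x₀ x hq
  have hKpos := kK_pos m A q x₀ x hq
  have h2K : (2 * kK m A q x₀ x)^2 = 4 * (q * kS m A x₀ x / (1 + q * kS m A x₀ x)) := by
    rw [mul_pow, hK2]; norm_num
  rw [kKd, kSd, div_pow _ (2 * kK m A q x₀ x), h2K]
  field_simp
  ring

noncomputable def kF (m A r q x₀ x : ℝ) : ℝ :=
  -(2*m*r) * ((1 - kT m x₀ x^2) / ((1 + kT m x₀ x^2) * (1 + q * kS m A x₀ x)^2))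

noncomputable def kE (m A r q x₀ x : ℝ) : ℝ :=
  8*m^2*r*q*kS m A x₀ x*(1 - kT m x₀ x^2)^2
      / (A*(1 + q*kS m A x₀ x)^3*(1 + kT m x₀ x^2)^2)
    + 16*m^2*r*kT m x₀ x^2 / ((1 + q*kS m A x₀ x)^2*(1 + kT m x₀ x^2)^2)

lemma kF_hasDeriv (m A r q x₀ x : ℝ) (hA : 0 < A) (hq : 0 < q) :
    HasDerivAt (kF m A r q x₀) (kE m A r q x₀ x) x := by
  have hden := kden_pos m A q x₀ x hq
  have hS := kS_pos m A x₀ x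
  have hT := kT_pos m x₀ x
  have hQ : (0:ℝ) < 1 + kT m x₀ x^2 := by positivity
  have hg : HasDerivAt (fun y => 1 - kT m x₀ y^2) (-(2 * kT m x₀ x * (2*m*kT m x₀ x))) x := by
    have := ((kT_hasDeriv m x₀ x).pow 2).const_sub 1
    refine this.congr_deriv (Eq.symm ?_)
    ring
  have hh : HasDerivAt (fun y => (1 + kT m x₀ y^2) * (1 + q * kS m A x₀ y)^2)
      ((2 * kT m x₀ x * (2*m*kT m x₀ x)) * (1 + q * kS m A x₀ x)^2
        + (1 + kT m x₀ x^2) * (2 * (1 + q * kS m A x₀ x) * (q * kSd m A x₀ x))) x := by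
    have h1 : HasDerivAt (fun y => 1 + kT m x₀ y^2) (2 * kT m x₀ x * (2*m*kT m x₀ x)) x := by
      have := ((kT_hasDeriv m x₀ x).pow 2).const_add 1
      refine this.congr_deriv (Eq.symm ?_)
      ring
    have h2 : HasDerivAt (fun y => (1 + q * kS m A x₀ y)^2)
        (2 * (1 + q * kS m A x₀ x) * (q * kSd m A x₀ x)) x := by
      have := (((kS_hasDeriv m A x₀ x hA).const_mul q).const_add 1).pow 2
      refine this.congr_deriv (Eq.symm ?_)
      rw [kSd]; ring
    exact h1.mul h2
  have hhne : (1 + kT m x₀ x^2) * (1 + q * kS m A x₀ x)^2 ≠ 0 := by positivity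
  have := (hg.div hh hhne).const_mul (-(2*m*r))
  refine this.congr_deriv (Eq.symm ?_)
  rw [kE, kSd]
  field_simp
  ring

lemma sin_two_arctan (u : ℝ) : Real.sin (2 * Real.arctan u) = 2*u/(1+u^2) := by
  have h : Real.sqrt (1+u^2) ^ 2 = 1+u^2 := Real.sq_sqrt (by positivity)
  have hne : Real.sqrt (1+u^2) ≠ 0 := by positivity
  rw [Real.sin_two_mul, Real.sin_arctan, Real.cos_arctan]
  field_simp
  rw [h]

lemma cos_two_arctan (u : ℝ) : Real.cos (2 * Real.arctan u) = (1-u^2)/(1+u^2) := by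
  have h : Real.sqrt (1+u^2) ^ 2 = 1+u^2 := Real.sq_sqrt (by positivity)
  have hne : Real.sqrt (1+u^2) ≠ 0 := by positivity
  rw [Real.cos_two_mul, Real.cos_arctan]
  field_simp
  nlinarith [h]

lemma kAlpha_hasDeriv (m x₀ x : ℝ) :
    HasDerivAt (fun y => Real.arctan (kT m x₀ y)) (2*m*kT m x₀ x/(1+kT m x₀ x^2)) x := by
  have := (kT_hasDeriv m x₀ x).arctan
  convert this using 1
  ring

lemma kE_nonneg (m A r q x₀ x : ℝ) (hA : 0 < A) (hr : 0 < r) (hq : 0 < q) :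
    0 ≤ kE m A r q x₀ x := by
  have hS := kS_pos m A x₀ x
  have hT := kT_pos m x₀ x
  have hden := kden_pos m A q x₀ x hq
  have hQ : (0:ℝ) < 1 + kT m x₀ x^2 := by positivity
  rw [kE]
  positivity

lemma lin_tendsto_bot (c x₀ : ℝ) (hc : 0 < c) :
    Filter.Tendsto (fun x : ℝ => c*(x-x₀)) Filter.atBot Filter.atBot := by
  apply Filter.Tendsto.const_mul_atBot hc
  simpa [sub_eq_add_neg] using Filter.tendsto_atBot_add_const_right Filter.atBot (-x₀) Filter.tendsto_id

lemma lin_tendsto_top (c x₀ : ℝ) (hc : 0 < c) :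
    Filter.Tendsto (fun x : ℝ => c*(x-x₀)) Filter.atTop Filter.atTop := by
  apply Filter.Tendsto.const_mul_atTop hc
  simpa [sub_eq_add_neg] using Filter.tendsto_atTop_add_const_right Filter.atTop (-x₀) Filter.tendsto_id

lemma kT_tendsto_bot (m x₀ : ℝ) (hm : 0 < m) :
    Filter.Tendsto (kT m x₀) Filter.atBot (nhds 0) :=
  Real.tendsto_exp_atBot.comp (lin_tendsto_bot (2*m) x₀ (by positivity))

lemma kT_tendsto_top (m x₀ : ℝ) (hm : 0 < m) :
    Filter.Tendsto (kT m x₀) Filter.atTop Filter.atTop :=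
  Real.tendsto_exp_atTop.comp (lin_tendsto_top (2*m) x₀ (by positivity))

lemma kS_tendsto_bot (m A x₀ : ℝ) (hm : 0 < m) (hA : 0 < A) :
    Filter.Tendsto (kS m A x₀) Filter.atBot (nhds 0) := by
  have hnum : Filter.Tendsto (fun x => Real.exp ((2*m/A)*(x-x₀))) Filter.atBot (nhds 0) :=
    Real.tendsto_exp_atBot.comp (lin_tendsto_bot (2*m/A) x₀ (by positivity))
  have hbase : Filter.Tendsto (fun x => 1 + Real.exp (4*m*(x-x₀))) Filter.atBot (nhds 1) := by
    have h0 : Filter.Tendsto (fun x => Real.exp (4*m*(x-x₀))) Filter.atBot (nhds 0) :=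
      Real.tendsto_exp_atBot.comp (lin_tendsto_bot (4*m) x₀ (by positivity))
    simpa using Filter.Tendsto.const_add 1 h0
  have hden : Filter.Tendsto (fun x => (1 + Real.exp (4*m*(x-x₀))) ^ (1/A)) Filter.atBot (nhds 1) := by
    have hc : ContinuousAt (fun y : ℝ => y ^ (1/A)) 1 :=
      Real.continuousAt_rpow_const 1 (1/A) (Or.inl one_ne_zero)
    have := hc.tendsto.comp hbase
    simpa [Function.comp_def] using this
  have hd := hnum.div hden one_ne_zero
  rw [show (0:ℝ)/1 = 0 by norm_num] at hd
  exact hd.congr fun x => rfl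

lemma kS_le (m A x₀ x : ℝ) (hm : 0 < m) (hA : 0 < A) :
    kS m A x₀ x ≤ Real.exp (-(2*m/A)*(x-x₀)) := by
  have h1 : Real.exp (4*m*(x-x₀)) ^ (1/A) ≤ (1 + Real.exp (4*m*(x-x₀))) ^ (1/A) :=
    Real.rpow_le_rpow (Real.exp_pos _).le (by linarith) (by positivity)
  have h2 : Real.exp (4*m*(x-x₀)) ^ (1/A) = Real.exp ((4*m*(x-x₀))*(1/A)) :=
    (Real.exp_mul _ _).symm
  have h3 : (0:ℝ) < Real.exp ((4*m*(x-x₀))*(1/A)) := Real.exp_pos _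
  have : kS m A x₀ x ≤ Real.exp ((2*m/A)*(x-x₀)) / Real.exp ((4*m*(x-x₀))*(1/A)) := by
    rw [kS]
    gcongr
    rw [← h2]; exact h1
  refine this.trans (le_of_eq ?_)
  rw [← Real.exp_sub]
  congr 1
  field_simp
  ring

lemma kS_tendsto_top (m A x₀ : ℝ) (hm : 0 < m) (hA : 0 < A) :
    Filter.Tendsto (kS m A x₀) Filter.atTop (nhds 0) := by
  apply squeeze_zero (fun x => (kS_pos m A x₀ x).le) (fun x => kS_le m A x₀ x hm hA)
  have : Filter.Tendsto (fun x : ℝ => (2*m/A)*(x-x₀)) Filter.atTop Filter.atTop :=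
    lin_tendsto_top (2*m/A) x₀ (by positivity)
  have h := Real.tendsto_exp_atBot.comp (Filter.tendsto_neg_atTop_atBot.comp this)
  exact h.congr fun x => by simp [Function.comp, neg_mul]

lemma kF_tendsto_bot (m A r q x₀ : ℝ) (hm : 0 < m) (hA : 0 < A) (hq : 0 < q) :
    Filter.Tendsto (kF m A r q x₀) Filter.atBot (nhds (-(2*m*r))) := by
  have hT2 : Filter.Tendsto (fun x => kT m x₀ x ^ 2) Filter.atBot (nhds 0) := by
    simpa using (kT_tendsto_bot m x₀ hm).pow 2
  have hS := kS_tendsto_bot m A x₀ hm hA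
  have hnum : Filter.Tendsto (fun x => 1 - kT m x₀ x^2) Filter.atBot (nhds 1) := by
    simpa using Filter.Tendsto.const_sub 1 hT2
  have hden : Filter.Tendsto (fun x => (1 + kT m x₀ x^2) * (1 + q * kS m A x₀ x)^2)
      Filter.atBot (nhds 1) := by
    have h1 : Filter.Tendsto (fun x => 1 + kT m x₀ x^2) Filter.atBot (nhds 1) := by
      simpa using Filter.Tendsto.const_add 1 hT2
    have h2 : Filter.Tendsto (fun x => (1 + q * kS m A x₀ x)^2) Filter.atBot (nhds 1) := by
      have := (Filter.Tendsto.const_add 1 (hS.const_mul q)).pow 2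
      simpa using this
    simpa using h1.mul h2
  have h2 := (hnum.div hden one_ne_zero).const_mul (-(2*m*r))
  rw [show -(2*m*r) * (1/1) = -(2*m*r) by norm_num] at h2
  exact h2.congr fun x => rfl

lemma kF_tendsto_top (m A r q x₀ : ℝ) (hm : 0 < m) (hA : 0 < A) (hq : 0 < q) :
    Filter.Tendsto (kF m A r q x₀) Filter.atTop (nhds (2*m*r)) := by
  have hT2 : Filter.Tendsto (fun x => 1 + kT m x₀ x ^ 2) Filter.atTop Filter.atTop := by
    apply Filter.tendsto_atTop_add_const_left
    exact (kT_tendsto_top m x₀ hm).atTop_mul_atTop₀ (kT_tendsto_top m x₀ hm) |>.congr (by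
      intro x; rw [sq])
  have hratio : Filter.Tendsto (fun x => (1 - kT m x₀ x^2)/(1 + kT m x₀ x^2))
      Filter.atTop (nhds (-1)) := by
    have h2 : Filter.Tendsto (fun x => 2/(1 + kT m x₀ x^2) - 1) Filter.atTop (nhds (-1)) := by
      have := (Filter.Tendsto.div_atTop (tendsto_const_nhds (x := (2:ℝ))) hT2).sub_const 1
      simpa using this
    apply h2.congr
    intro x
    have hQ : (0:ℝ) < 1 + kT m x₀ x^2 := by positivity
    field_simp
    ring
  have hS := kS_tendsto_top m A x₀ hm hA
  have hP : Filter.Tendsto (fun x => ((1 + q * kS m A x₀ x)^2)⁻¹) Filter.atTop (nhds 1) := by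
    have := ((Filter.Tendsto.const_add 1 (hS.const_mul q)).pow 2).inv₀ (by norm_num)
    simpa using this
  have h := (hratio.mul hP).const_mul (-(2*m*r))
  have hv : (-(2*m*r)) * (-1 * 1) = 2*m*r := by ring
  rw [hv] at h
  refine h.congr fun x => ?_
  have hQ : (0:ℝ) < 1 + kT m x₀ x^2 := by positivity
  have hden := kden_pos m A q x₀ x hq
  rw [kF]
  field_simp

open MeasureTheory in
lemma kE_integrable (m A r q x₀ : ℝ) (hm : 0 < m) (hA : 0 < A) (hr : 0 < r) (hq : 0 < q) :
    Integrable (kE m A r q x₀) := by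
  have hIoi : IntegrableOn (kE m A r q x₀) (Set.Ioi (0:ℝ)) :=
    integrableOn_Ioi_deriv_of_nonneg' (fun x _ => kF_hasDeriv m A r q x₀ x hA hq)
      (fun x _ => kE_nonneg m A r q x₀ x hA hr hq) (kF_tendsto_top m A r q x₀ hm hA hq)
  have hGd : ∀ x ∈ Set.Ici (0:ℝ), HasDerivAt (fun y => kF m A r q x₀ (-y))
      (-(kE m A r q x₀ (-x))) x := by
    intro x _
    exact (HasDerivAt.scomp x (kF_hasDeriv m A r q x₀ (-x) hA hq) (hasDerivAt_neg' x)).congr_deriv (by simp)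
  have hGtop : Filter.Tendsto (fun y => kF m A r q x₀ (-y)) Filter.atTop (nhds (-(2*m*r))) :=
    (kF_tendsto_bot m A r q x₀ hm hA hq).comp Filter.tendsto_neg_atTop_atBot
  have hIoi' : IntegrableOn (fun x => -(kE m A r q x₀ (-x))) (Set.Ioi (0:ℝ)) :=
    integrableOn_Ioi_deriv_of_nonpos' hGd
      (fun x _ => neg_nonpos.2 (kE_nonneg m A r q x₀ (-x) hA hr hq)) hGtop
  have hIoi'' : IntegrableOn (fun x => kE m A r q x₀ (-x)) (Set.Ioi (0:ℝ)) := by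
    exact hIoi'.neg.congr (Filter.Eventually.of_forall fun x => by simp)
  have hIio : IntegrableOn (kE m A r q x₀) (Set.Iio (0:ℝ)) := by
    have h := (MeasurePreserving.integrableOn_comp_preimage
      (Measure.measurePreserving_neg (volume : Measure ℝ))
      (Homeomorph.neg ℝ).measurableEmbedding).2 hIoi''
    have hset : (Neg.neg : ℝ → ℝ) ⁻¹' (Set.Ioi (0:ℝ)) = Set.Iio 0 := by
      ext y; simp
    rw [hset] at h
    exact h.congr_fun (fun x _ => by simp) measurableSet_Iio
  have : IntegrableOn (kE m A r q x₀) Set.univ := by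
    rw [← Set.Iio_union_Ici (a := (0:ℝ))]
    exact hIio.union ((integrableOn_Ici_iff_integrableOn_Ioi (f := kE m A r q x₀)).2 hIoi)
  rwa [integrableOn_univ] at this

open MeasureTheory in
lemma kE_integral (m A r q x₀ : ℝ) (hm : 0 < m) (hA : 0 < A) (hr : 0 < r) (hq : 0 < q) :
    (∫ x, kE m A r q x₀ x) = 4*m*r := by
  have h := integral_of_hasDerivAt_of_tendsto (f := kF m A r q x₀) (f' := kE m A r q x₀)
    (fun x => kF_hasDeriv m A r q x₀ x hA hq) (kE_integrable m A r q x₀ hm hA hr hq)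
    (kF_tendsto_bot m A r q x₀ hm hA hq) (kF_tendsto_top m A r q x₀ hm hA hq)
  rw [h]; ring


theorem explicit_kink_energy_eq
    (m A r q x₀ : ℝ) (hm : 0 < m) (hA : 0 < A) (hr : 0 < r) (hq : 0 < q)
    (σ : ℝ → ℝ)
    (hσ : ∀ x, σ x = Real.exp ((2 * m / A) * x) / (1 + Real.exp (4 * m * x)) ^ (1 / A))
    (α : ℝ → ℝ) (hα : ∀ x, α x = Real.arctan (Real.exp (2 * m * (x - x₀))))
    (κ : ℝ → ℝ)
    (hκ : ∀ x, κ x = Real.sqrt (q * σ (x - x₀) / (1 + q * σ (x - x₀)))) :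
    (∫ x, r * (4 * A * (deriv κ x) ^ 2 + 2 * (1 - κ x ^ 2) ^ 2 * (deriv α x) ^ 2
        + 2 * m ^ 2 * (1 - κ x ^ 2) ^ 2 * Real.sin (2 * α x) ^ 2
        + 4 * m ^ 2 * κ x ^ 2 * (1 - κ x ^ 2) ^ 2 * Real.cos (2 * α x) ^ 2 / A))
      = 4 * m * r := by
  have hκfun : κ = kK m A q x₀ := funext fun x => by rw [hκ, hσ]; rfl
  have hαfun : α = fun y => Real.arctan (kT m x₀ y) := funext fun x => by rw [hα]; rfl
  have hpt : ∀ x, r * (4 * A * (deriv κ x) ^ 2 + 2 * (1 - κ x ^ 2) ^ 2 * (deriv α x) ^ 2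
        + 2 * m ^ 2 * (1 - κ x ^ 2) ^ 2 * Real.sin (2 * α x) ^ 2
        + 4 * m ^ 2 * κ x ^ 2 * (1 - κ x ^ 2) ^ 2 * Real.cos (2 * α x) ^ 2 / A)
      = kE m A r q x₀ x := by
    intro x
    rw [hκfun, hαfun]
    rw [(kK_hasDeriv m A q x₀ x hA hq).deriv, (kAlpha_hasDeriv m x₀ x).deriv]
    rw [kK_sq m A q x₀ x hq, kKd_sq m A q x₀ x hA hq]
    rw [sin_two_arctan, cos_two_arctan]
    have hS := kS_pos m A x₀ x
    have hT := kT_pos m x₀ x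
    have hden := kden_pos m A q x₀ x hq
    have hQ : (0:ℝ) < 1 + kT m x₀ x^2 := by positivity
    rw [kE]
    field_simp
    ring
  simp only [hpt]
  exact kE_integral m A r q x₀ hm hA hr hq
end
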